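/- arXiv:2603.05559 — 3 statements merged into one kernel-verified Lean document; each statement's English description precedes it below -/
import Mathlib

section
/- Consider the coupled Markov chain of the time-series-based decision maker. Assume p_A + p_B = 1 and 1/2 < p_A < 1, and let γ ∈ (0,1]. Let μ₁ be the probability vector on S with μ₁(σ,0) = 1/2 for σ ∈ {+1,−1} and μ₁(σ,i) = 0 for i ≠ 0, and define μ_{n+1} = M μ_n for n ≥ 1. Define CDR_n = Σ_{i=−N}^{ℓ} μ_n(+1,i) + Σ_{i=−N}^{−ℓ−1} μ_n(−1,i). Then CDR_n converges as n → ∞ to (2 p_A^{2N+1} − p_A^{N−ℓ}(1−p_A)^{N+ℓ+1} − p_A^{N+ℓ+1}(1−p_A)^{N−ℓ}) / (2 (p_A^{2N+1} − (1−p_A)^{2N+1})). -/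
open Matrix Finset Filter Topology

/-- Threshold index set `{-N, ..., N}`. -/
abbrev Idx (N : ℕ) : Type := {i : ℤ // i ∈ Finset.Icc (-(N : ℤ)) (N : ℤ)}

/-- State space `{+1, -1} × {-N, ..., N}`; `true` encodes `+1`, `false` encodes `-1`. -/
abbrev St (N : ℕ) : Type := Bool × Idx N

/-- The upward-move probability `q(σ, i)`. -/
noncomputable def qfun (pA pB : ℝ) (ℓ : ℤ) (σ : Bool) (i : ℤ) : ℝ :=
  if σ then (if i ≤ ℓ then 1 - pA else pB) else (if i ≤ -ℓ - 1 then 1 - pA else pB)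

/-- The 2×2 signal-flip matrix `Γ` with diagonal `1 - γ` and off-diagonal `γ`. -/
noncomputable def Gam (γ : ℝ) (τ σ : Bool) : ℝ := if τ = σ then 1 - γ else γ

/-- The transition matrix `M` of the coupled chain `(s_n, θ_n)`:
`M_{(τ,j),(σ,i)} = Γ_{τ,σ} q(σ,i)` if `j = min(i+1, N)`,
`Γ_{τ,σ} (1 - q(σ,i))` if `j = max(i-1, -N)`, `0` otherwise
(coinciding contributions are added). -/
noncomputable def Mmat (N : ℕ) (pA pB γ : ℝ) (ℓ : ℤ) : Matrix (St N) (St N) ℝ :=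
  fun tj si =>
    Gam γ tj.1 si.1 *
      ((if (tj.2 : ℤ) = min ((si.2 : ℤ) + 1) (N : ℤ) then qfun pA pB ℓ si.1 si.2 else 0) +
       (if (tj.2 : ℤ) = max ((si.2 : ℤ) - 1) (-(N : ℤ)) then 1 - qfun pA pB ℓ si.1 si.2 else 0))



/-- The position-transition weight. -/
noncomputable def Aex (N : ℕ) (p : ℝ) (j i : ℤ) : ℝ :=
  (if j = min (i + 1) (N : ℤ) then 1 - p else 0) +
  (if j = max (i - 1) (-(N : ℤ)) then p else 0)

/-- The CDF of the position marginal. -/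
noncomputable def Ff (N : ℕ) (μ : ℕ → St N → ℝ) (n : ℕ) (j : ℤ) : ℝ :=
  ∑ i : Idx N, (if (i : ℤ) ≤ j then μ n (true, i) + μ n (false, i) else 0)

lemma sum_ind (N : ℕ) (j : ℤ) {c : ℤ} (hc : c ∈ Finset.Icc (-(N:ℤ)) (N:ℤ)) (v : ℝ) :
    (∑ i' : Idx N, if (i' : ℤ) ≤ j then (if (i' : ℤ) = c then v else 0) else 0)
      = if c ≤ j then v else 0 := by
  rw [Finset.sum_coe_sort (Finset.Icc (-(N:ℤ)) (N:ℤ))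
      (fun i' => if i' ≤ j then (if i' = c then v else 0) else 0)]
  rw [show (∑ i' ∈ Finset.Icc (-(N:ℤ)) (N:ℤ), if i' ≤ j then (if i' = c then v else 0) else 0)
      = ∑ i' ∈ Finset.Icc (-(N:ℤ)) (N:ℤ), if i' = c then (if c ≤ j then v else 0) else 0 from
    Finset.sum_congr rfl fun i' _ => by
      by_cases h : i' = c
      · subst h; simp
      · simp [h]]
  rw [Finset.sum_ite_eq' _ c (fun _ => if c ≤ j then v else 0), if_pos hc]

lemma W_eval (N : ℕ) (p : ℝ) (j : ℤ) (i : Idx N) :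
    (∑ i' : Idx N, if (i' : ℤ) ≤ j then Aex N p i' i else 0)
      = (if min ((i:ℤ) + 1) (N:ℤ) ≤ j then 1 - p else 0)
        + (if max ((i:ℤ) - 1) (-(N:ℤ)) ≤ j then p else 0) := by
  have hmem := i.2
  rw [Finset.mem_Icc] at hmem
  have h1 : min ((i:ℤ) + 1) (N:ℤ) ∈ Finset.Icc (-(N:ℤ)) (N:ℤ) := by
    rw [Finset.mem_Icc]; omega
  have h2 : max ((i:ℤ) - 1) (-(N:ℤ)) ∈ Finset.Icc (-(N:ℤ)) (N:ℤ) := by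
    rw [Finset.mem_Icc]; omega
  have split : (∑ i' : Idx N, if (i' : ℤ) ≤ j then Aex N p i' i else 0)
      = (∑ i' : Idx N, if (i' : ℤ) ≤ j then (if (i':ℤ) = min ((i:ℤ) + 1) (N:ℤ) then 1 - p else 0) else 0)
        + (∑ i' : Idx N, if (i' : ℤ) ≤ j then (if (i':ℤ) = max ((i:ℤ) - 1) (-(N:ℤ)) then p else 0) else 0) := by
    rw [← Finset.sum_add_distrib]
    refine Finset.sum_congr rfl fun i' _ => ?_
    unfold Aex
    split_ifs <;> ring
  rw [split, sum_ind N j h1, sum_ind N j h2]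

lemma Ff_step (N : ℕ) (p : ℝ) (μ : ℕ → St N → ℝ) (n : ℕ)
    (hν : ∀ j : Idx N, μ (n+1) (true, j) + μ (n+1) (false, j)
        = ∑ i : Idx N, Aex N p j i * (μ n (true, i) + μ n (false, i))) (j : ℤ) :
    Ff N μ (n+1) j = ∑ i : Idx N,
      ((if min ((i:ℤ) + 1) (N:ℤ) ≤ j then 1 - p else 0)
        + (if max ((i:ℤ) - 1) (-(N:ℤ)) ≤ j then p else 0))
        * (μ n (true, i) + μ n (false, i)) := by
  unfold Ff
  calc (∑ i' : Idx N, if (i' : ℤ) ≤ j then μ (n+1) (true, i') + μ (n+1) (false, i') else 0)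
      = ∑ i' : Idx N, ∑ i : Idx N,
          (if (i' : ℤ) ≤ j then Aex N p i' i * (μ n (true, i) + μ n (false, i)) else 0) := by
        refine Finset.sum_congr rfl fun i' _ => ?_
        rw [hν i']
        by_cases h : (i' : ℤ) ≤ j
        · simp only [if_pos h]
        · simp only [if_neg h, Finset.sum_const_zero]
    _ = ∑ i : Idx N, ∑ i' : Idx N,
          (if (i' : ℤ) ≤ j then Aex N p i' i * (μ n (true, i) + μ n (false, i)) else 0) :=
        Finset.sum_comm
    _ = ∑ i : Idx N,
          (∑ i' : Idx N, if (i' : ℤ) ≤ j then Aex N p i' i else 0)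
            * (μ n (true, i) + μ n (false, i)) := by
        refine Finset.sum_congr rfl fun i _ => ?_
        rw [Finset.sum_mul]
        refine Finset.sum_congr rfl fun i' _ => ?_
        split_ifs <;> ring
    _ = _ := by
        refine Finset.sum_congr rfl fun i _ => ?_
        rw [W_eval]
noncomputable def rr (p : ℝ) : ℝ := (1 - p) / p
noncomputable def Fst (N : ℕ) (p : ℝ) (j : ℤ) : ℝ :=
  (1 - rr p ^ (j + N + 1)) / (1 - rr p ^ (2 * (N : ℤ) + 1))
noncomputable def ss (p : ℝ) : ℝ := Real.sqrt ((1 - p) / p)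
noncomputable def lam (p : ℝ) : ℝ := 2 * Real.sqrt ((1 - p) * p)

variable {p : ℝ} {N : ℕ}

lemma hr0 (h1 : 1/2 < p) (h2 : p < 1) : 0 < rr p := by
  unfold rr; apply div_pos <;> linarith

lemma hr1 (h1 : 1/2 < p) : rr p < 1 := by
  unfold rr; rw [div_lt_one (by linarith)]; linarith

lemma den_pos (h1 : 1/2 < p) (h2 : p < 1) : 0 < 1 - rr p ^ (2 * (N : ℤ) + 1) := by
  have := zpow_lt_one₀ (hr0 h1 h2) (hr1 h1) (n := 2 * (N : ℤ) + 1) (by positivity)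
  linarith

lemma Fs_harmonic (h1 : 1/2 < p) (h2 : p < 1) (j : ℤ) :
    Fst N p j = (1 - p) * Fst N p (j - 1) + p * Fst N p (j + 1) := by
  have hrne : rr p ≠ 0 := (hr0 h1 h2).ne'
  have hD : (1 : ℝ) - rr p ^ (2 * (N : ℤ) + 1) ≠ 0 := (den_pos h1 h2).ne'
  have hpne : p ≠ 0 := by positivity
  unfold Fst
  have e2 : rr p ^ (j - 1 + N + 1) = rr p ^ (j + N) := by congr 1; ring
  have e1 : rr p ^ (j + N + 1) = rr p ^ (j + N) * rr p := zpow_add_one₀ hrne _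
  have e3 : rr p ^ (j + 1 + N + 1) = rr p ^ (j + N) * rr p * rr p := by
    rw [show j + 1 + N + 1 = (j + N) + 1 + 1 by ring, zpow_add_one₀ hrne, zpow_add_one₀ hrne]
  rw [e1, e2, e3, ← mul_div_assoc, ← mul_div_assoc, ← add_div]
  congr 1
  have hr : rr p = (1 - p) + p * (rr p * rr p) := by
    unfold rr; field_simp; ring
  linear_combination (- rr p ^ (j + (N:ℤ))) * hr

lemma Fs_nonneg (h1 : 1/2 < p) (h2 : p < 1) {j : ℤ} (hj : -(N:ℤ) - 1 ≤ j) :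
    0 ≤ Fst N p j := by
  apply div_nonneg _ (den_pos h1 h2).le
  have := zpow_le_one₀ (hr0 h1 h2) (hr1 h1).le (n := j + N + 1) (by omega)
  linarith

lemma Fs_le_one (h1 : 1/2 < p) (h2 : p < 1) {j : ℤ} (hj : j ≤ (N:ℤ)) :
    Fst N p j ≤ 1 := by
  unfold Fst
  rw [div_le_one (den_pos h1 h2)]
  have := zpow_right_anti₀ (hr0 h1 h2) (hr1 h1).le (show j + N + 1 ≤ 2 * (N:ℤ) + 1 by omega)
  linarith

lemma Fs_top (h1 : 1/2 < p) (h2 : p < 1) : Fst N p N = 1 := by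
  unfold Fst
  rw [show ((N:ℤ) + N + 1) = 2 * (N:ℤ) + 1 by ring, div_self (den_pos h1 h2).ne']

lemma Fs_bot : Fst N p (-(N:ℤ) - 1) = 0 := by
  unfold Fst
  rw [show (-(N:ℤ) - 1 + N + 1) = 0 by ring, zpow_zero]
  simp

lemma hs0 (h1 : 1/2 < p) (h2 : p < 1) : 0 < ss p := by
  unfold ss; apply Real.sqrt_pos.mpr; apply div_pos <;> linarith

lemma hs1 (h1 : 1/2 < p) (h2 : p < 1) : ss p < 1 := by
  unfold ss
  rw [Real.sqrt_lt' one_pos]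
  rw [div_lt_iff₀ (by linarith)]; nlinarith

lemma hlam0 (h1 : 1/2 < p) (h2 : p < 1) : 0 < lam p := by
  unfold lam
  have : 0 < (1 - p) * p := by nlinarith
  positivity

lemma hlam1 (h1 : 1/2 < p) (h2 : p < 1) : lam p < 1 := by
  have h : Real.sqrt ((1 - p) * p) < 1/2 := by
    rw [Real.sqrt_lt' (by norm_num)]
    nlinarith
  unfold lam; linarith

lemma key_ineq (h1 : 1/2 < p) (h2 : p < 1) (j : ℤ) :
    (1 - p) * ss p ^ (j - 1) + p * ss p ^ (j + 1) = lam p * ss p ^ j := by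
  have hsne : ss p ≠ 0 := (hs0 h1 h2).ne'
  have hps2 : p * (ss p * ss p) = 1 - p := by
    have h : ss p * ss p = (1 - p) / p := Real.mul_self_sqrt (div_nonneg (by linarith) (by linarith))
    rw [h]; field_simp
  have hss : Real.sqrt ((1 - p) * p) * ss p = 1 - p := by
    unfold ss
    rw [← Real.sqrt_mul (by nlinarith)]
    rw [show (1 - p) * p * ((1 - p) / p) = (1 - p)^2 by field_simp]
    exact Real.sqrt_sq (by linarith)
  have e1 : ss p ^ (j + 1) = ss p ^ (j - 1) * ss p * ss p := by
    rw [← zpow_add_one₀ hsne, ← zpow_add_one₀ hsne]; congr 1; ring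
  have e2 : ss p ^ j = ss p ^ (j - 1) * ss p := by
    rw [← zpow_add_one₀ hsne]; congr 1; ring
  rw [e1, e2]
  unfold lam
  linear_combination (ss p ^ (j - 1)) * hps2 - 2 * (ss p ^ (j - 1)) * hss
lemma limit_eq (h1 : 1/2 < p) (h2 : p < 1) {ℓ : ℤ} (hℓ0 : 0 ≤ ℓ) (hℓN : ℓ < N) :
    (Fst N p ℓ + Fst N p (-ℓ - 1)) / 2 =
      (2 * p ^ (2 * N + 1)
          - p ^ ((N : ℤ) - ℓ) * (1 - p) ^ ((N : ℤ) + ℓ + 1)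
          - p ^ ((N : ℤ) + ℓ + 1) * (1 - p) ^ ((N : ℤ) - ℓ))
        / (2 * (p ^ (2 * N + 1) - (1 - p) ^ (2 * N + 1))) := by
  have hp0 : (0:ℝ) < p := by linarith
  have hq0 : (0:ℝ) < 1 - p := by linarith
  obtain ⟨A, hA⟩ : ∃ A : ℕ, (A : ℤ) = ℓ + N + 1 := ⟨(ℓ + N + 1).toNat, by omega⟩
  obtain ⟨B, hB⟩ : ∃ B : ℕ, (B : ℤ) = (N : ℤ) - ℓ := ⟨((N:ℤ) - ℓ).toNat, by omega⟩
  have hAB : 2 * N + 1 = A + B := by omega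
  have e1 : rr p ^ (ℓ + (N:ℤ) + 1) = rr p ^ A := by rw [← hA, zpow_natCast]
  have e2 : rr p ^ (-ℓ - 1 + (N:ℤ) + 1) = rr p ^ B := by
    rw [show -ℓ - 1 + (N:ℤ) + 1 = (N:ℤ) - ℓ by ring, ← hB, zpow_natCast]
  have e3 : rr p ^ (2 * (N:ℤ) + 1) = rr p ^ (2 * N + 1) := by
    rw [show 2 * (N:ℤ) + 1 = ((2 * N + 1 : ℕ) : ℤ) by push_cast; ring, zpow_natCast]
  have e4 : p ^ ((N : ℤ) - ℓ) = p ^ B := by rw [← hB, zpow_natCast]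
  have e5 : p ^ ((N : ℤ) + ℓ + 1) = p ^ A := by
    rw [show (N:ℤ) + ℓ + 1 = ℓ + N + 1 by ring, ← hA, zpow_natCast]
  have e6 : (1 - p) ^ ((N : ℤ) - ℓ) = (1 - p) ^ B := by rw [← hB, zpow_natCast]
  have e7 : (1 - p) ^ ((N : ℤ) + ℓ + 1) = (1 - p) ^ A := by
    rw [show (N:ℤ) + ℓ + 1 = ℓ + N + 1 by ring, ← hA, zpow_natCast]
  unfold Fst
  rw [e1, e2, e3, e4, e5, e6, e7, hAB]
  have hr1 : rr p < 1 := by unfold rr; rw [div_lt_one hp0]; linarith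
  have hr0 : (0:ℝ) < rr p := div_pos hq0 hp0
  have hD1 : (1:ℝ) - rr p ^ (A + B) ≠ 0 := by
    have : rr p ^ (A + B) < 1 := pow_lt_one₀ hr0.le hr1 (by omega)
    linarith
  have hD2 : p ^ (A + B) - (1 - p) ^ (A + B) ≠ 0 := by
    have : (1 - p) ^ (A + B) < p ^ (A + B) :=
      pow_lt_pow_left₀ (by linarith) hq0.le (by omega)
    linarith
  have hrr : rr p = (1 - p) / p := rfl
  rw [hrr] at hD1 ⊢
  have hpne : p ≠ 0 := hp0.ne'
  have hpA : p ^ A ≠ 0 := by positivity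
  have hpB : p ^ B ≠ 0 := by positivity
  have hk : 1 - ((1 - p) / p) ^ (A + B) = (p ^ (A + B) - (1 - p) ^ (A + B)) / p ^ (A + B) := by
    rw [div_pow, one_sub_div (by positivity)]
  rw [hk]
  simp only [div_pow]
  field_simp
  ring

/-- Theorem (limiting correct decision rate when `p_A + p_B = 1`). -/
theorem cdr_tendsto_limit
    (N : ℕ) (hN : 0 < N) (x : ℝ) (hx0 : 0 < x) (hxN : x < N)
    (hxint : ∀ k : ℤ, (k : ℝ) ≠ x)
    (pA pB : ℝ) (hpAhalf : 1 / 2 < pA) (hpA1 : pA < 1) (hpB0 : 0 < pB) (hpB1 : pB < 1)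
    (hsum : pA + pB = 1)
    (γ : ℝ) (hγ0 : 0 < γ) (hγ1 : γ ≤ 1)
    (μ : ℕ → St N → ℝ)
    (hμ1 : ∀ σ : Bool, ∀ i : Idx N, μ 1 (σ, i) = if (i : ℤ) = 0 then 1 / 2 else 0)
    (hμrec : ∀ n ≥ 1, μ (n + 1) = (Mmat N pA pB γ ⌊x⌋).mulVec (μ n))
    (CDR : ℕ → ℝ)
    (hCDR : ∀ n, CDR n =
      (∑ i : Idx N, if (i : ℤ) ≤ ⌊x⌋ then μ n (true, i) else 0) +
      (∑ i : Idx N, if (i : ℤ) ≤ -⌊x⌋ - 1 then μ n (false, i) else 0)) :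
    Filter.Tendsto CDR Filter.atTop
      (𝓝 ((2 * pA ^ (2 * N + 1)
            - pA ^ ((N : ℤ) - ⌊x⌋) * (1 - pA) ^ ((N : ℤ) + ⌊x⌋ + 1)
            - pA ^ ((N : ℤ) + ⌊x⌋ + 1) * (1 - pA) ^ ((N : ℤ) - ⌊x⌋))
          / (2 * (pA ^ (2 * N + 1) - (1 - pA) ^ (2 * N + 1))))) := by

  set ℓ : ℤ := ⌊x⌋ with hℓdef
  have hℓ0 : 0 ≤ ℓ := Int.floor_nonneg.mpr hx0.le
  have hℓN : ℓ < N := by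
    have : x < ((N : ℤ) : ℝ) := by exact_mod_cast hxN
    exact Int.floor_lt.mpr this
  have hpB : pB = 1 - pA := by linarith
  -- q is constant
  have hq : ∀ (σ : Bool) (i : ℤ), qfun pA pB ℓ σ i = 1 - pA := by
    intro σ i; cases σ <;> simp [qfun, hpB]
  -- matrix entries
  have hM : ∀ (τ σ : Bool) (j i : Idx N),
      Mmat N pA pB γ ℓ (τ, j) (σ, i) = Gam γ τ σ * Aex N pA j i := by
    intro τ σ j i
    unfold Mmat Aex
    simp only [hq]
    split_ifs <;> ring
  -- one-step recursion
  have hrec : ∀ n, 1 ≤ n → ∀ (τ : Bool) (j : Idx N),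
      μ (n+1) (τ, j) = ∑ σ : Bool, ∑ i : Idx N, Gam γ τ σ * Aex N pA j i * μ n (σ, i) := by
    intro n hn τ j
    rw [hμrec n hn]
    show (∑ si : St N, Mmat N pA pB γ ℓ (τ, j) si * μ n si) = _
    rw [Fintype.sum_prod_type]
    refine Finset.sum_congr rfl fun σ _ => Finset.sum_congr rfl fun i _ => ?_
    rw [hM τ σ j i]
  -- symmetry in the signal coordinate
  have hsym : ∀ n, 1 ≤ n → ∀ i : Idx N, μ n (true, i) = μ n (false, i) := by
    intro n hn
    induction n, hn using Nat.le_induction with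
    | base => intro i; rw [hμ1, hμ1]
    | succ n hn ih =>
      intro j
      rw [hrec n hn true j, hrec n hn false j]
      simp only [Fintype.sum_bool]
      rw [← Finset.sum_add_distrib, ← Finset.sum_add_distrib]
      refine Finset.sum_congr rfl fun i _ => ?_
      rw [ih i]
      simp only [Gam]
      norm_num
      ring
  -- marginal recursion
  have hν : ∀ n, 1 ≤ n → ∀ j : Idx N,
      μ (n+1) (true, j) + μ (n+1) (false, j)
        = ∑ i : Idx N, Aex N pA j i * (μ n (true, i) + μ n (false, i)) := by
    intro n hn j
    rw [hrec n hn true j, hrec n hn false j]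
    simp only [Fintype.sum_bool]
    rw [← Finset.sum_add_distrib, ← Finset.sum_add_distrib, ← Finset.sum_add_distrib]
    refine Finset.sum_congr rfl fun i _ => ?_
    simp only [Gam]
    norm_num
    ring
  -- CDF recursion in the interior
  have hFrec : ∀ n, 1 ≤ n → ∀ j : ℤ, -(N:ℤ) ≤ j → j ≤ (N:ℤ) - 1 →
      Ff N μ (n+1) j = (1 - pA) * Ff N μ n (j-1) + pA * Ff N μ n (j+1) := by
    intro n hn j hj1 hj2
    rw [Ff_step N pA μ n (hν n hn) j]
    have step : ∀ i : Idx N,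
        ((if min ((i:ℤ) + 1) (N:ℤ) ≤ j then 1 - pA else 0)
          + (if max ((i:ℤ) - 1) (-(N:ℤ)) ≤ j then pA else 0))
          * (μ n (true, i) + μ n (false, i))
        = (1 - pA) * (if (i:ℤ) ≤ j - 1 then μ n (true, i) + μ n (false, i) else 0)
          + pA * (if (i:ℤ) ≤ j + 1 then μ n (true, i) + μ n (false, i) else 0) := by
      intro i
      have hmem := i.2
      rw [Finset.mem_Icc] at hmem
      have e1 : (min ((i:ℤ) + 1) (N:ℤ) ≤ j) ↔ ((i:ℤ) ≤ j - 1) := by omega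
      have e2 : (max ((i:ℤ) - 1) (-(N:ℤ)) ≤ j) ↔ ((i:ℤ) ≤ j + 1) := by omega
      simp only [e1, e2]
      split_ifs <;> ring
    rw [Finset.sum_congr rfl fun i _ => step i, Finset.sum_add_distrib,
      ← Finset.mul_sum, ← Finset.mul_sum]
    rfl
  -- total mass
  have hFtop : ∀ n, 1 ≤ n → Ff N μ n (N:ℤ) = 1 := by
    intro n hn
    induction n, hn using Nat.le_induction with
    | base =>
      unfold Ff
      rw [show (∑ i : Idx N, if (i:ℤ) ≤ (N:ℤ) then μ 1 (true, i) + μ 1 (false, i) else 0)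
          = ∑ i : Idx N, (if (i:ℤ) ≤ (N:ℤ) then (if (i:ℤ) = 0 then 1 else 0) else 0) from
        Finset.sum_congr rfl fun i _ => by
          rw [hμ1, hμ1]; split_ifs <;> norm_num]
      rw [sum_ind N (N:ℤ) (by rw [Finset.mem_Icc]; omega) 1]
      rw [if_pos (by omega)]
    | succ n hn ih =>
      rw [Ff_step N pA μ n (hν n hn) (N:ℤ)]
      have step : ∀ i : Idx N,
          ((if min ((i:ℤ) + 1) (N:ℤ) ≤ (N:ℤ) then 1 - pA else 0)
            + (if max ((i:ℤ) - 1) (-(N:ℤ)) ≤ (N:ℤ) then pA else 0))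
            * (μ n (true, i) + μ n (false, i))
          = (if (i:ℤ) ≤ (N:ℤ) then μ n (true, i) + μ n (false, i) else 0) := by
        intro i
        have hmem := i.2
        rw [Finset.mem_Icc] at hmem
        rw [if_pos (by omega), if_pos (by omega), if_pos (by omega)]
        ring
      rw [Finset.sum_congr rfl fun i _ => step i]
      exact ih
  -- CDF at the bottom
  have hFbot : ∀ n, Ff N μ n (-(N:ℤ) - 1) = 0 := by
    intro n
    unfold Ff
    rw [Finset.sum_congr rfl fun (i : Idx N) _ => ?_, Finset.sum_const_zero]
    have hmem := i.2
    rw [Finset.mem_Icc] at hmem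
    rw [if_neg (by omega)]
  -- explicit initial CDF
  have hF1 : ∀ j : ℤ, Ff N μ 1 j = if 0 ≤ j then 1 else 0 := by
    intro j
    unfold Ff
    rw [show (∑ i : Idx N, if (i:ℤ) ≤ j then μ 1 (true, i) + μ 1 (false, i) else 0)
        = ∑ i : Idx N, (if (i:ℤ) ≤ j then (if (i:ℤ) = 0 then 1 else 0) else 0) from
      Finset.sum_congr rfl fun i _ => by
        rw [hμ1, hμ1]; split_ifs <;> norm_num]
    rw [sum_ind N j (by rw [Finset.mem_Icc]; omega) 1]
  -- geometric error bound
  set C : ℝ := 2 * ss pA ^ (-(N:ℤ)) with hCdef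
  have hsne : ss pA ≠ 0 := (hs0 hpAhalf hpA1).ne'
  have hC0 : 0 < C := by
    have := hs0 hpAhalf hpA1
    positivity
  have hbound : ∀ n, 1 ≤ n → ∀ j : ℤ, -(N:ℤ) - 1 ≤ j → j ≤ (N:ℤ) →
      |Ff N μ n j - Fst N pA j| ≤ C * lam pA ^ (n - 1) * ss pA ^ j := by
    intro n hn
    induction n, hn using Nat.le_induction with
    | base =>
      intro j hj1 hj2
      have hs0' := hs0 hpAhalf hpA1
      have h1 : 0 ≤ Ff N μ 1 j := by rw [hF1]; split_ifs <;> norm_num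
      have h2 : Ff N μ 1 j ≤ 1 := by rw [hF1]; split_ifs <;> norm_num
      have h3 := Fs_nonneg hpAhalf hpA1 (N := N) hj1
      have h4 := Fs_le_one hpAhalf hpA1 (N := N) hj2
      have habs : |Ff N μ 1 j - Fst N pA j| ≤ 1 := abs_le.mpr ⟨by linarith, by linarith⟩
      have hpow : (1:ℝ) ≤ ss pA ^ (j - N) :=
        one_le_zpow_of_nonpos₀ hs0' (hs1 hpAhalf hpA1).le (by omega)
      have : C * lam pA ^ (1 - 1) * ss pA ^ j = 2 * ss pA ^ (j - N) := by
        rw [hCdef]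
        rw [pow_zero, mul_one, mul_assoc, ← zpow_add₀ hsne]
        congr 2
        ring
      rw [this]
      linarith
    | succ n hn ih =>
      intro j hj1 hj2
      have hs0' := hs0 hpAhalf hpA1
      have hl0 := hlam0 hpAhalf hpA1
      have hrhs : C * lam pA ^ (n + 1 - 1) * ss pA ^ j
          = lam pA * (C * lam pA ^ (n - 1) * ss pA ^ j) := by
        rw [show n + 1 - 1 = (n - 1) + 1 from by omega, pow_succ]
        ring
      by_cases hjt : j = (N:ℤ)
      · subst hjt
        rw [hFtop (n+1) (by omega), Fs_top hpAhalf hpA1]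
        simp only [sub_self, abs_zero]
        positivity
      by_cases hjb : j = -(N:ℤ) - 1
      · subst hjb
        rw [hFbot (n+1), Fs_bot]
        simp only [sub_self, abs_zero]
        positivity
      -- interior
      have hj2' : j ≤ (N:ℤ) - 1 := by omega
      have hj1' : -(N:ℤ) ≤ j := by omega
      rw [hFrec n hn j hj1' hj2', Fs_harmonic hpAhalf hpA1 j]
      have b1 := ih (j-1) (by omega) (by omega)
      have b2 := ih (j+1) (by omega) (by omega)
      have key := key_ineq hpAhalf hpA1 j
      have e : (1 - pA) * Ff N μ n (j-1) + pA * Ff N μ n (j+1)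
            - ((1 - pA) * Fst N pA (j-1) + pA * Fst N pA (j+1))
          = (1 - pA) * (Ff N μ n (j-1) - Fst N pA (j-1))
            + pA * (Ff N μ n (j+1) - Fst N pA (j+1)) := by ring
      rw [e]
      have habs : |(1 - pA) * (Ff N μ n (j-1) - Fst N pA (j-1))
            + pA * (Ff N μ n (j+1) - Fst N pA (j+1))|
          ≤ (1 - pA) * |Ff N μ n (j-1) - Fst N pA (j-1)|
            + pA * |Ff N μ n (j+1) - Fst N pA (j+1)| := by
        refine (abs_add_le _ _).trans ?_
        rw [abs_mul, abs_mul, abs_of_nonneg (by linarith : (0:ℝ) ≤ 1 - pA),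
          abs_of_nonneg (by linarith : (0:ℝ) ≤ pA)]
      have c1 : (1 - pA) * |Ff N μ n (j-1) - Fst N pA (j-1)|
          ≤ (1 - pA) * (C * lam pA ^ (n - 1) * ss pA ^ (j-1)) :=
        mul_le_mul_of_nonneg_left b1 (by linarith)
      have c2 : pA * |Ff N μ n (j+1) - Fst N pA (j+1)|
          ≤ pA * (C * lam pA ^ (n - 1) * ss pA ^ (j+1)) :=
        mul_le_mul_of_nonneg_left b2 (by linarith)
      have fin : (1 - pA) * (C * lam pA ^ (n - 1) * ss pA ^ (j-1))
            + pA * (C * lam pA ^ (n - 1) * ss pA ^ (j+1))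
          = C * lam pA ^ (n + 1 - 1) * ss pA ^ j := by
        rw [hrhs]
        have : (1 - pA) * (C * lam pA ^ (n - 1) * ss pA ^ (j-1))
              + pA * (C * lam pA ^ (n - 1) * ss pA ^ (j+1))
            = (C * lam pA ^ (n - 1)) * ((1 - pA) * ss pA ^ (j-1) + pA * ss pA ^ (j+1)) := by
          ring
        rw [this, key]
        ring
      linarith
  -- CDR in terms of the CDF
  have hCDR' : ∀ n, 1 ≤ n → CDR n = (Ff N μ n ℓ + Ff N μ n (-ℓ - 1)) / 2 := by
    intro n hn
    rw [hCDR n]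
    unfold Ff
    have e1 : (∑ i : Idx N, if (i:ℤ) ≤ ℓ then μ n (true, i) + μ n (false, i) else 0)
        = 2 * ∑ i : Idx N, (if (i:ℤ) ≤ ℓ then μ n (true, i) else 0) := by
      rw [Finset.mul_sum]
      refine Finset.sum_congr rfl fun i _ => ?_
      rw [← hsym n hn i]
      split_ifs <;> ring
    have e2 : (∑ i : Idx N, if (i:ℤ) ≤ -ℓ - 1 then μ n (true, i) + μ n (false, i) else 0)
        = 2 * ∑ i : Idx N, (if (i:ℤ) ≤ -ℓ - 1 then μ n (false, i) else 0) := by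
      rw [Finset.mul_sum]
      refine Finset.sum_congr rfl fun i _ => ?_
      rw [hsym n hn i]
      split_ifs <;> ring
    rw [e1, e2]
    ring
  set L : ℝ := (Fst N pA ℓ + Fst N pA (-ℓ - 1)) / 2 with hLdef
  set K : ℝ := C * (ss pA ^ ℓ + ss pA ^ (-ℓ - 1)) / 2 with hKdef
  have hKb : ∀ n, 1 ≤ n → |CDR n - L| ≤ K * lam pA ^ (n - 1) := by
    intro n hn
    have b1 := hbound n hn ℓ (by omega) (by omega)
    have b2 := hbound n hn (-ℓ - 1) (by omega) (by omega)
    have e : CDR n - L = ((Ff N μ n ℓ - Fst N pA ℓ)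
        + (Ff N μ n (-ℓ - 1) - Fst N pA (-ℓ - 1))) / 2 := by
      rw [hCDR' n hn, hLdef]; ring
    rw [e]
    have habs := abs_add_le (Ff N μ n ℓ - Fst N pA ℓ) (Ff N μ n (-ℓ - 1) - Fst N pA (-ℓ - 1))
    rw [abs_div, abs_two]
    rw [hKdef]
    have : K * lam pA ^ (n-1) = (C * lam pA ^ (n-1) * ss pA ^ ℓ
        + C * lam pA ^ (n-1) * ss pA ^ (-ℓ - 1)) / 2 := by rw [hKdef]; ring
    rw [← hKdef, this]
    have := abs_div (Ff N μ n ℓ - Fst N pA ℓ + (Ff N μ n (-ℓ - 1) - Fst N pA (-ℓ - 1))) 2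
    linarith [abs_two (α := ℝ)]
  -- convergence
  have hl0 := hlam0 hpAhalf hpA1
  have hl1 := hlam1 hpAhalf hpA1
  have hgeo : Tendsto (fun n : ℕ => K * lam pA ^ (n - 1)) atTop (𝓝 0) := by
    have h1 : Tendsto (fun k : ℕ => lam pA ^ k) atTop (𝓝 0) :=
      tendsto_pow_atTop_nhds_zero_of_lt_one hl0.le hl1
    have h2 : Tendsto (fun n : ℕ => lam pA ^ (n - 1)) atTop (𝓝 0) :=
      h1.comp (tendsto_sub_atTop_nat 1)
    simpa using h2.const_mul K
  have hzero : Tendsto (fun n => CDR n - L) atTop (𝓝 0) := by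
    apply squeeze_zero_norm' _ hgeo
    filter_upwards [Filter.eventually_ge_atTop 1] with n hn
    simpa [Real.norm_eq_abs] using hKb n hn
  have hlim : Tendsto CDR atTop (𝓝 L) := by
    have := hzero.add_const L
    simpa using this
  have hEq : L = (2 * pA ^ (2 * N + 1)
            - pA ^ ((N : ℤ) - ℓ) * (1 - pA) ^ ((N : ℤ) + ℓ + 1)
            - pA ^ ((N : ℤ) + ℓ + 1) * (1 - pA) ^ ((N : ℤ) - ℓ))
          / (2 * (pA ^ (2 * N + 1) - (1 - pA) ^ (2 * N + 1))) := by
    rw [hLdef]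
    exact limit_eq hpAhalf hpA1 hℓ0 hℓN
  rw [← hEq]
  exact hlim
end

section
/- Assume p_A + p_B = 1 and 1/2 < p_A < 1, and let γ ∈ [0,1]. Define π : S → ℝ by π(σ,i) = (p_A−p_B) p_A^{N−i} p_B^{N+i} / (2 (p_A^{2N+1} − p_B^{2N+1})) for σ ∈ {+1,−1} and i ∈ {−N,...,N}. Then π is a stationary probability vector of M: all entries are positive, they sum to 1, and M π = π. In particular π(+1,i) = π(−1,i) for every i. -/
open Matrix Finset Filter Topology

set_option maxHeartbeats 1000000

lemma key_sum (N : ℕ) (hN : 0 < N) (pA pB : ℝ) (hA : 0 < pA) (hB : 0 < pB)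
    (hsum : pA + pB = 1) (j : ℤ) (hj1 : -(N:ℤ) ≤ j) (hj2 : j ≤ N) :
    ∑ i ∈ Finset.Icc (-(N:ℤ)) N,
      ((if j = min (i+1) (N:ℤ) then pB else 0) + (if j = max (i-1) (-(N:ℤ)) then pA else 0)) *
        (pA ^ ((N:ℤ) - i) * pB ^ ((N:ℤ) + i))
    = pA ^ ((N:ℤ) - j) * pB ^ ((N:ℤ) + j) := by
  set F : ℤ → ℝ := fun i => pA ^ ((N:ℤ) - i) * pB ^ ((N:ℤ) + i) with hF
  have step : ∀ i ∈ Finset.Icc (-(N:ℤ)) N,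
      ((if j = min (i+1) (N:ℤ) then pB else 0) + (if j = max (i-1) (-(N:ℤ)) then pA else 0)) * F i
      = (if i = j-1 then pB * F i else 0) + (if i = j+1 then pA * F i else 0) +
        (if i = j then (if j = N then pB * F i else if j = -(N:ℤ) then pA * F i else 0) else 0) := by
    intro i hi
    rw [Finset.mem_Icc] at hi
    split_ifs <;> first | (exfalso; omega) | ring
  rw [Finset.sum_congr rfl step]
  rw [Finset.sum_add_distrib, Finset.sum_add_distrib,
    Finset.sum_ite_eq' _ (j-1) (fun i => pB * F i),
    Finset.sum_ite_eq' _ (j+1) (fun i => pA * F i),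
    Finset.sum_ite_eq' _ j (fun i => if j = N then pB * F i else if j = -(N:ℤ) then pA * F i else 0)]
  have e1 : pB * F (j-1) = pA * F j := by
    rw [hF]
    simp only []
    rw [show (N:ℤ) - (j-1) = ((N:ℤ) - j) + 1 by ring, show (N:ℤ) + (j-1) = ((N:ℤ) + j) - 1 by ring,
      zpow_add_one₀ hA.ne', zpow_sub_one₀ hB.ne']
    field_simp
  have e2 : pA * F (j+1) = pB * F j := by
    rw [hF]
    simp only []
    rw [show (N:ℤ) - (j+1) = ((N:ℤ) - j) - 1 by ring, show (N:ℤ) + (j+1) = ((N:ℤ) + j) + 1 by ring,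
      zpow_add_one₀ hB.ne', zpow_sub_one₀ hA.ne']
    field_simp
  by_cases hjN : j = (N:ℤ)
  · have h1 : j - 1 ∈ Finset.Icc (-(N:ℤ)) N := by rw [Finset.mem_Icc]; omega
    have h2 : j + 1 ∉ Finset.Icc (-(N:ℤ)) N := by rw [Finset.mem_Icc]; omega
    have h3 : j ∈ Finset.Icc (-(N:ℤ)) N := by rw [Finset.mem_Icc]; omega
    rw [if_pos h1, if_neg h2, if_pos h3, if_pos hjN]
    rw [e1]
    linear_combination (F j) * hsum
  · by_cases hjmN : j = -(N:ℤ)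
    · have h1 : j - 1 ∉ Finset.Icc (-(N:ℤ)) N := by rw [Finset.mem_Icc]; omega
      have h2 : j + 1 ∈ Finset.Icc (-(N:ℤ)) N := by rw [Finset.mem_Icc]; omega
      have h3 : j ∈ Finset.Icc (-(N:ℤ)) N := by rw [Finset.mem_Icc]; omega
      rw [if_neg h1, if_pos h2, if_pos h3, if_neg hjN, if_pos hjmN]
      rw [e2]
      linear_combination (F j) * hsum
    · have h1 : j - 1 ∈ Finset.Icc (-(N:ℤ)) N := by rw [Finset.mem_Icc]; omega
      have h2 : j + 1 ∈ Finset.Icc (-(N:ℤ)) N := by rw [Finset.mem_Icc]; omega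
      have h3 : j ∈ Finset.Icc (-(N:ℤ)) N := by rw [Finset.mem_Icc]; omega
      rw [if_pos h1, if_pos h2, if_pos h3, if_neg hjN, if_neg hjmN]
      rw [e1, e2]
      linear_combination (F j) * hsum

lemma key_sum' (N : ℕ) (hN : 0 < N) (pA pB : ℝ) (hA : 0 < pA) (hB : 0 < pB)
    (hsum : pA + pB = 1) (j : ℤ) (hj1 : -(N:ℤ) ≤ j) (hj2 : j ≤ N) :
    ∑ i : Idx N,
      ((if j = min ((i:ℤ)+1) (N:ℤ) then pB else 0) +
       (if j = max ((i:ℤ)-1) (-(N:ℤ)) then pA else 0)) *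
        (pA ^ ((N:ℤ) - (i:ℤ)) * pB ^ ((N:ℤ) + (i:ℤ)))
    = pA ^ ((N:ℤ) - j) * pB ^ ((N:ℤ) + j) := by
  rw [← key_sum N hN pA pB hA hB hsum j hj1 hj2]
  exact Finset.sum_coe_sort (Finset.Icc (-(N:ℤ)) N)
    (fun i => ((if j = min (i+1) (N:ℤ) then pB else 0) +
      (if j = max (i-1) (-(N:ℤ)) then pA else 0)) * (pA ^ ((N:ℤ) - i) * pB ^ ((N:ℤ) + i)))

lemma geom_icc (N : ℕ) (pA pB : ℝ) :
    (∑ i ∈ Finset.Icc (-(N:ℤ)) N, pA ^ ((N:ℤ) - i) * pB ^ ((N:ℤ) + i)) * (pA - pB)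
    = pA ^ (2*N+1) - pB ^ (2*N+1) := by
  have hb : ∑ i ∈ Finset.Icc (-(N:ℤ)) N, pA ^ ((N:ℤ) - i) * pB ^ ((N:ℤ) + i)
      = ∑ k ∈ Finset.range (2*N+1), pA ^ k * pB ^ (2*N+1-1-k) := by
    apply Finset.sum_nbij' (i := fun a => ((N:ℤ) - a).toNat) (j := fun k => (N:ℤ) - k)
    · intro a ha; rw [Finset.mem_Icc] at ha; rw [Finset.mem_range]; omega
    · intro a ha; rw [Finset.mem_range] at ha; rw [Finset.mem_Icc]; omega
    · intro a ha; rw [Finset.mem_Icc] at ha; omega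
    · intro a ha; rw [Finset.mem_range] at ha; omega
    · intro a ha
      rw [Finset.mem_Icc] at ha
      have h1 : (N:ℤ) - a = ((((N:ℤ) - a).toNat : ℕ) : ℤ) := by omega
      have h2 : (N:ℤ) + a = ((2*N+1-1-((N:ℤ) - a).toNat : ℕ) : ℤ) := by omega
      rw [h1, h2, zpow_natCast, zpow_natCast, Int.toNat_natCast]
  rw [hb, geom_sum₂_mul]

lemma geom_icc' (N : ℕ) (pA pB : ℝ) :
    (∑ i : Idx N, pA ^ ((N:ℤ) - (i:ℤ)) * pB ^ ((N:ℤ) + (i:ℤ))) * (pA - pB)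
    = pA ^ (2*N+1) - pB ^ (2*N+1) := by
  rw [← geom_icc N pA pB]
  congr 1
  exact Finset.sum_coe_sort (Finset.Icc (-(N:ℤ)) N)
    (fun i => pA ^ ((N:ℤ) - i) * pB ^ ((N:ℤ) + i))

/-- Theorem: when `p_A + p_B = 1`, the vector
`π(σ,i) = (p_A - p_B) p_A^{N-i} p_B^{N+i} / (2 (p_A^{2N+1} - p_B^{2N+1}))` is a stationary
probability vector of `M`; in particular `π(+1,i) = π(-1,i)` for every `i`. -/
theorem stationary_vector_of_Mmat
    (N : ℕ) (hN : 0 < N) (x : ℝ) (hx0 : 0 < x) (hxN : x < N)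
    (hxint : ∀ k : ℤ, (k : ℝ) ≠ x)
    (pA pB : ℝ) (hpAhalf : 1 / 2 < pA) (hpA1 : pA < 1) (hpB0 : 0 < pB) (hpB1 : pB < 1)
    (hsum : pA + pB = 1)
    (γ : ℝ) (hγ0 : 0 ≤ γ) (hγ1 : γ ≤ 1)
    (π : St N → ℝ)
    (hπ : ∀ (σ : Bool) (i : Idx N),
      π (σ, i) = (pA - pB) * pA ^ ((N : ℤ) - (i : ℤ)) * pB ^ ((N : ℤ) + (i : ℤ))
                   / (2 * (pA ^ (2 * N + 1) - pB ^ (2 * N + 1)))) :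
    (∀ s : St N, 0 < π s) ∧ (∑ s : St N, π s = 1) ∧
      (Mmat N pA pB γ ⌊x⌋).mulVec π = π ∧
      (∀ i : Idx N, π (true, i) = π (false, i)) := by
  have hA0 : 0 < pA := by linarith
  have hBA : pB < pA := by linarith
  have hab : 0 < pA - pB := by linarith
  have hD : 0 < pA ^ (2*N+1) - pB ^ (2*N+1) := by
    have := pow_lt_pow_left₀ hBA hpB0.le (n := 2*N+1) (by omega)
    linarith
  -- positivity
  have hpos : ∀ s : St N, 0 < π s := by
    rintro ⟨σ, i⟩
    rw [hπ]
    apply div_pos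
    · exact mul_pos (mul_pos hab (zpow_pos hA0 _)) (zpow_pos hpB0 _)
    · linarith
  -- sum of the basic weights
  have hG : ∑ i : Idx N, pA ^ ((N:ℤ) - (i:ℤ)) * pB ^ ((N:ℤ) + (i:ℤ))
      = (pA ^ (2*N+1) - pB ^ (2*N+1)) / (pA - pB) := by
    rw [eq_div_iff hab.ne']
    exact geom_icc' N pA pB
  -- sum to one
  have hone : ∑ s : St N, π s = 1 := by
    rw [Fintype.sum_prod_type, Fintype.sum_bool]
    have hhalf : ∀ σ : Bool, ∑ i : Idx N, π (σ, i) = 1 / 2 := by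
      intro σ
      have hstep : ∀ i : Idx N, π (σ, i)
          = (pA - pB) / (2 * (pA ^ (2*N+1) - pB ^ (2*N+1))) *
            (pA ^ ((N:ℤ) - (i:ℤ)) * pB ^ ((N:ℤ) + (i:ℤ))) := by
        intro i; rw [hπ]; ring
      simp only [hstep]
      rw [← Finset.mul_sum, hG]
      field_simp
    rw [hhalf, hhalf]
    norm_num
  -- stationarity
  have hq : ∀ (σ : Bool) (i : ℤ), qfun pA pB ⌊x⌋ σ i = pB := by
    intro σ i
    have h : 1 - pA = pB := by linarith
    unfold qfun
    split_ifs <;> simp [h]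
  have hM : ∀ (τ σ : Bool) (j i : Idx N),
      Mmat N pA pB γ ⌊x⌋ (τ, j) (σ, i)
        = Gam γ τ σ * ((if (j:ℤ) = min ((i:ℤ)+1) (N:ℤ) then pB else 0) +
                       (if (j:ℤ) = max ((i:ℤ)-1) (-(N:ℤ)) then pA else 0)) := by
    intro τ σ j i
    have h : 1 - pB = pA := by linarith
    unfold Mmat
    simp only [hq, h]
  have hstat : (Mmat N pA pB γ ⌊x⌋).mulVec π = π := by
    funext s
    obtain ⟨τ, j⟩ := s
    have hj := j.2
    rw [Finset.mem_Icc] at hj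
    show ∑ si : St N, Mmat N pA pB γ ⌊x⌋ (τ, j) si * π si = π (τ, j)
    rw [Fintype.sum_prod_type, Fintype.sum_bool]
    have hinner : ∀ σ : Bool, ∑ i : Idx N, Mmat N pA pB γ ⌊x⌋ (τ, j) (σ, i) * π (σ, i)
        = Gam γ τ σ * π (τ, j) := by
      intro σ
      have hstep : ∀ i : Idx N, Mmat N pA pB γ ⌊x⌋ (τ, j) (σ, i) * π (σ, i)
          = Gam γ τ σ * ((pA - pB) / (2 * (pA ^ (2*N+1) - pB ^ (2*N+1)))) *
            (((if (j:ℤ) = min ((i:ℤ)+1) (N:ℤ) then pB else 0) +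
              (if (j:ℤ) = max ((i:ℤ)-1) (-(N:ℤ)) then pA else 0)) *
             (pA ^ ((N:ℤ) - (i:ℤ)) * pB ^ ((N:ℤ) + (i:ℤ)))) := by
        intro i
        rw [hM, hπ]
        ring
      simp only [hstep]
      rw [← Finset.mul_sum,
        key_sum' N hN pA pB hA0 hpB0 hsum (j:ℤ) hj.1 hj.2, hπ]
      ring
    rw [hinner true, hinner false]
    have hGsum : Gam γ τ true + Gam γ τ false = 1 := by
      cases τ <;> simp [Gam]
    linear_combination π (τ, j) * hGsum
  refine ⟨hpos, hone, hstat, fun i => by rw [hπ, hπ]⟩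
end

section
/- Let p ∈ (1/2,1), q = 1−p, and let u ∈ ℝ^{2N+1} be given by u_i = (p−q) p^{N−i} q^{N+i} / (p^{2N+1} − q^{2N+1}). Then for every probability vector w on {−N,...,N} (entries nonnegative, summing to 1), the iterates 𝒫^{n} w converge entrywise to u as n → ∞. -/
open Matrix Finset Filter Topology

/-- The `(2N+1)×(2N+1)` threshold transition matrix `𝒫`: column `i` has entry `q` at
row `min(i+1, N)`, entry `p` at row `max(i-1, -N)`, and `0` elsewhere
(coinciding contributions are added). -/
noncomputable def Pmat (N : ℕ) (p q : ℝ) : Matrix (Idx N) (Idx N) ℝ :=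
  fun j i =>
    (if (j : ℤ) = min ((i : ℤ) + 1) (N : ℤ) then q else 0) +
    (if (j : ℤ) = max ((i : ℤ) - 1) (-(N : ℤ)) then p else 0)

namespace PP

variable {N : ℕ} {p q : ℝ}

instance (N : ℕ) : Nonempty (Idx N) := ⟨⟨0, by simp⟩⟩

lemma idx_mem (i : Idx N) : -(N:ℤ) ≤ (i:ℤ) ∧ (i:ℤ) ≤ N := by
  have := i.2; rw [Finset.mem_Icc] at this; exact this

lemma Pmat_nonneg (hp : 0 ≤ p) (hq : 0 ≤ q) (j i : Idx N) : 0 ≤ Pmat N p q j i := by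
  unfold Pmat; positivity

lemma sum_indicator (c : ℝ) (a : ℤ) (ha : a ∈ Finset.Icc (-(N:ℤ)) N) :
    ∑ j : Idx N, (if (j:ℤ) = a then c else 0) = c := by
  rw [show (∑ j : Idx N, (if (j:ℤ) = a then c else 0))
      = ∑ j : Idx N, (if j = ⟨a, ha⟩ then c else 0) by
    refine Finset.sum_congr rfl fun j _ => ?_
    congr 1
    simp [Subtype.ext_iff]]
  simp

lemma Pmat_col (hp : 0 ≤ p) (hq : 0 ≤ q) (hpq : p + q = 1) (i : Idx N) :
    ∑ j : Idx N, Pmat N p q j i = 1 := by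
  unfold Pmat
  rw [Finset.sum_add_distrib, sum_indicator q _ (by
      rw [Finset.mem_Icc]; have := idx_mem i; omega),
    sum_indicator p _ (by rw [Finset.mem_Icc]; have := idx_mem i; omega)]
  linarith

lemma mul_entry_nonneg {A B : Matrix (Idx N) (Idx N) ℝ}
    (hA : ∀ j i, 0 ≤ A j i) (hB : ∀ j i, 0 ≤ B j i) (j i : Idx N) : 0 ≤ (A * B) j i := by
  rw [Matrix.mul_apply]
  exact Finset.sum_nonneg fun k _ => mul_nonneg (hA j k) (hB k i)

lemma mul_col_sum {A B : Matrix (Idx N) (Idx N) ℝ}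
    (hA : ∀ i, ∑ j, A j i = 1) (hB : ∀ i, ∑ j, B j i = 1) (i : Idx N) :
    ∑ j, (A * B) j i = 1 := by
  simp only [Matrix.mul_apply]
  rw [Finset.sum_comm]
  calc ∑ k, ∑ j, A j k * B k i = ∑ k, (∑ j, A j k) * B k i := by
        simp [Finset.sum_mul]
    _ = ∑ k, B k i := by
        refine Finset.sum_congr rfl fun k _ => by rw [hA k, one_mul]
    _ = 1 := hB i

lemma pow_entry_nonneg {A : Matrix (Idx N) (Idx N) ℝ} (hA : ∀ j i, 0 ≤ A j i) :
    ∀ n, ∀ j i, 0 ≤ (A ^ n) j i := by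
  intro n
  induction n with
  | zero => intro j i; simp [Matrix.one_apply]; split <;> norm_num
  | succ n ih =>
      rw [pow_succ']
      exact mul_entry_nonneg hA ih

lemma pow_col_sum {A : Matrix (Idx N) (Idx N) ℝ} (hA : ∀ i, ∑ j, A j i = 1) :
    ∀ n, ∀ i, ∑ j, (A ^ n) j i = 1 := by
  intro n
  induction n with
  | zero => intro i; simp [Matrix.one_apply]
  | succ n ih =>
      rw [pow_succ']
      exact mul_col_sum hA ih

lemma mulVec_sum_zero {A : Matrix (Idx N) (Idx N) ℝ} (hA : ∀ i, ∑ j, A j i = 1)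
    (x : Idx N → ℝ) (hx : ∑ i, x i = 0) : ∑ j, A.mulVec x j = 0 := by
  simp only [Matrix.mulVec, dotProduct]
  rw [Finset.sum_comm]
  calc ∑ i, ∑ j, A j i * x i = ∑ i, (∑ j, A j i) * x i := by simp [Finset.sum_mul]
    _ = ∑ i, x i := by
        refine Finset.sum_congr rfl fun k _ => by rw [hA k, one_mul]
    _ = 0 := hx

lemma contract {A : Matrix (Idx N) (Idx N) ℝ} {ε : ℝ}
    (hε : ∀ j i, ε ≤ A j i) (hA : ∀ i, ∑ j, A j i = 1)
    (x : Idx N → ℝ) (hx : ∑ i, x i = 0) :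
    ∑ j, |A.mulVec x j| ≤ (1 - (Fintype.card (Idx N) : ℝ) * ε) * ∑ i, |x i| := by
  have key : ∀ j, |A.mulVec x j| ≤ ∑ i, (A j i - ε) * |x i| := by
    intro j
    have : A.mulVec x j = ∑ i, (A j i - ε) * x i := by
      simp only [Matrix.mulVec, dotProduct, sub_mul]
      rw [Finset.sum_sub_distrib, ← Finset.mul_sum, hx, mul_zero, sub_zero]
    rw [this]
    calc |∑ i, (A j i - ε) * x i| ≤ ∑ i, |(A j i - ε) * x i| :=
          Finset.abs_sum_le_sum_abs _ _
      _ = ∑ i, (A j i - ε) * |x i| := by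
          refine Finset.sum_congr rfl fun i _ => ?_
          rw [abs_mul, abs_of_nonneg (by linarith [hε j i])]
  calc ∑ j, |A.mulVec x j| ≤ ∑ j, ∑ i, (A j i - ε) * |x i| :=
        Finset.sum_le_sum fun j _ => key j
    _ = ∑ i, (∑ j, (A j i - ε)) * |x i| := by
        rw [Finset.sum_comm]
        exact Finset.sum_congr rfl fun i _ => (Finset.sum_mul _ _ _).symm
    _ = ∑ i, (1 - (Fintype.card (Idx N) : ℝ) * ε) * |x i| := by
        refine Finset.sum_congr rfl fun i _ => ?_
        rw [Finset.sum_sub_distrib, hA i, Finset.sum_const, Finset.card_univ,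
          nsmul_eq_mul]
    _ = (1 - (Fintype.card (Idx N) : ℝ) * ε) * ∑ i, |x i| := by
        rw [Finset.mul_sum]

lemma nonexpand {A : Matrix (Idx N) (Idx N) ℝ}
    (hε : ∀ j i, (0:ℝ) ≤ A j i) (hA : ∀ i, ∑ j, A j i = 1)
    (x : Idx N → ℝ) :
    ∑ j, |A.mulVec x j| ≤ ∑ i, |x i| := by
  have key : ∀ j, |A.mulVec x j| ≤ ∑ i, A j i * |x i| := by
    intro j
    simp only [Matrix.mulVec, dotProduct]
    calc |∑ i, A j i * x i| ≤ ∑ i, |A j i * x i| := Finset.abs_sum_le_sum_abs _ _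
      _ = ∑ i, A j i * |x i| := by
          refine Finset.sum_congr rfl fun i _ => ?_
          rw [abs_mul, abs_of_nonneg (hε j i)]
  calc ∑ j, |A.mulVec x j| ≤ ∑ j, ∑ i, A j i * |x i| := Finset.sum_le_sum fun j _ => key j
    _ = ∑ i, (∑ j, A j i) * |x i| := by rw [Finset.sum_comm]; simp [Finset.sum_mul]
    _ = ∑ i, |x i| := by
        refine Finset.sum_congr rfl fun k _ => by rw [hA k, one_mul]

def sUp (i : Idx N) : Idx N :=
  ⟨min ((i:ℤ) + 1) N, by rw [Finset.mem_Icc]; have := idx_mem i; omega⟩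

def sDn (i : Idx N) : Idx N :=
  ⟨max ((i:ℤ) - 1) (-(N:ℤ)), by rw [Finset.mem_Icc]; have := idx_mem i; omega⟩

lemma sUp_iter_val (n : ℕ) (i : Idx N) : ((sUp^[n] i : Idx N) : ℤ) = min ((i:ℤ) + n) N := by
  induction n with
  | zero => have := idx_mem i; simp; omega
  | succ n ih =>
      rw [Function.iterate_succ_apply']
      show min (((sUp^[n] i : Idx N) : ℤ) + 1) N = _
      rw [ih]
      push_cast
      omega

lemma sDn_iter_val (n : ℕ) (i : Idx N) : ((sDn^[n] i : Idx N) : ℤ) = max ((i:ℤ) - n) (-(N:ℤ)) := by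
  induction n with
  | zero => have := idx_mem i; simp; omega
  | succ n ih =>
      rw [Function.iterate_succ_apply']
      show max (((sDn^[n] i : Idx N) : ℤ) - 1) (-(N:ℤ)) = _
      rw [ih]
      push_cast
      omega

lemma Pmat_sUp (hp : 0 ≤ p) (hq : 0 ≤ q) (i : Idx N) : q ≤ Pmat N p q (sUp i) i := by
  have : Pmat N p q (sUp i) i = q + (if ((sUp i : Idx N):ℤ) = max ((i:ℤ)-1) (-(N:ℤ)) then p else 0) := by
    unfold Pmat
    rw [if_pos (show ((sUp i : Idx N):ℤ) = min ((i:ℤ)+1) (N:ℤ) from rfl)]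
  rw [this]
  split <;> linarith

lemma Pmat_sDn (hp : 0 ≤ p) (hq : 0 ≤ q) (i : Idx N) : p ≤ Pmat N p q (sDn i) i := by
  have : Pmat N p q (sDn i) i = (if ((sDn i : Idx N):ℤ) = min ((i:ℤ)+1) N then q else 0) + p := by
    unfold Pmat
    rw [if_pos (show ((sDn i : Idx N):ℤ) = max ((i:ℤ)-1) (-(N:ℤ)) from rfl)]
  rw [this]
  split <;> linarith

lemma pow_entry_lb (hp : 0 ≤ p) (hq : 0 ≤ q)
    (hnn : ∀ n j i, 0 ≤ ((Pmat N p q) ^ n) j i) :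
    ∀ a b (i : Idx N), p ^ b * q ^ a ≤ ((Pmat N p q) ^ (b + a)) (sDn^[b] (sUp^[a] i)) i := by
  have step : ∀ (n : ℕ) (i k : Idx N) (c : ℝ), 0 ≤ c → c ≤ ((Pmat N p q) ^ n) k i →
      ∀ j : Idx N, Pmat N p q j k * c ≤ ((Pmat N p q) ^ (n + 1)) j i := by
    intro n i k c hc hck j
    rw [pow_succ', Matrix.mul_apply]
    calc Pmat N p q j k * c ≤ Pmat N p q j k * ((Pmat N p q) ^ n) k i := by
          have h0 : 0 ≤ Pmat N p q j k := by unfold Pmat; positivity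
          exact mul_le_mul_of_nonneg_left hck h0
      _ ≤ ∑ k', Pmat N p q j k' * ((Pmat N p q) ^ n) k' i := by
          refine Finset.single_le_sum (f := fun k' => Pmat N p q j k' * ((Pmat N p q) ^ n) k' i)
            (fun k' _ => mul_nonneg (by unfold Pmat; positivity) (hnn n k' i)) (Finset.mem_univ k)
  -- first: up chain
  have up : ∀ a (i : Idx N), q ^ a ≤ ((Pmat N p q) ^ a) (sUp^[a] i) i := by
    intro a
    induction a with
    | zero => intro i; simp [Matrix.one_apply]
    | succ a ih =>
        intro i
        rw [Function.iterate_succ_apply', pow_succ]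
        calc q ^ a * q = q * q ^ a := by ring
          _ ≤ Pmat N p q (sUp (sUp^[a] i)) (sUp^[a] i) * ((Pmat N p q) ^ a) (sUp^[a] i) i := by
              apply mul_le_mul (Pmat_sUp hp hq _) (ih i) (by positivity)
              have := Pmat_sUp hp hq (sUp^[a] i); linarith
          _ ≤ _ := step a i (sUp^[a] i) (((Pmat N p q) ^ a) (sUp^[a] i) i)
              (hnn a _ i) (le_refl _) _
  intro a b
  induction b with
  | zero => intro i; simpa using up a i
  | succ b ih =>
      intro i
      rw [Function.iterate_succ_apply']
      rw [show b + 1 + a = (b + a) + 1 by omega]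
      set y := sDn^[b] (sUp^[a] i) with hy
      calc p ^ (b+1) * q ^ a = p * (p ^ b * q ^ a) := by ring
        _ ≤ Pmat N p q (sDn y) y * ((Pmat N p q) ^ (b + a)) y i := by
            apply mul_le_mul (Pmat_sDn hp hq y) (ih i) (by positivity)
            have := Pmat_sDn hp hq y; linarith
        _ ≤ _ := step (b + a) i y (((Pmat N p q) ^ (b + a)) y i) (hnn _ _ _) (le_refl _) _

lemma pow4N_pos (hp : 0 < p) (hq : 0 < q)
    (hnn : ∀ n j i, 0 ≤ ((Pmat N p q) ^ n) j i) (j i : Idx N) :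
    0 < ((Pmat N p q) ^ (4 * N)) j i := by
  have hjm := idx_mem j
  have him := idx_mem i
  set b : ℕ := ((N:ℤ) - (j:ℤ)).toNat with hb
  set a : ℕ := (3 * (N:ℤ) + (j:ℤ)).toNat with ha
  have hba : b + a = 4 * N := by omega
  have key := pow_entry_lb hp.le hq.le hnn a b i
  have h1 : ((sUp^[a] i : Idx N) : ℤ) = (N:ℤ) := by
    rw [sUp_iter_val]; omega
  have h2 : sDn^[b] (sUp^[a] i) = j := by
    apply Subtype.ext
    rw [sDn_iter_val, h1]
    omega
  rw [hba, h2] at key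
  calc (0:ℝ) < p ^ b * q ^ a := by positivity
    _ ≤ _ := key

lemma sum_U (hN : 0 < N) (hp : 0 < q) (hq : 0 < p) (hlt : q < p) :
    ∑ i ∈ Finset.Icc (-(N:ℤ)) N,
      (p - q) * p ^ ((N:ℤ) - i) * q ^ ((N:ℤ) + i) / (p ^ (2*N+1) - q ^ (2*N+1)) = 1 := by
  have hD : q ^ (2*N+1) < p ^ (2*N+1) :=
    pow_lt_pow_left₀ hlt hp.le (by omega)
  have hD0 : p ^ (2*N+1) - q ^ (2*N+1) ≠ 0 := by linarith
  have reindex : ∑ i ∈ Finset.Icc (-(N:ℤ)) N, p ^ ((N:ℤ) - i) * q ^ ((N:ℤ) + i)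
      = ∑ k ∈ Finset.range (2*N+1), p ^ k * q ^ (2*N - k) := by
    refine Finset.sum_nbij' (fun i => ((N:ℤ) - i).toNat) (fun k => (N:ℤ) - k) ?_ ?_ ?_ ?_ ?_
    · intro i hi; rw [Finset.mem_Icc] at hi; rw [Finset.mem_range]; omega
    · intro k hk; rw [Finset.mem_range] at hk; rw [Finset.mem_Icc]; omega
    · intro i hi; rw [Finset.mem_Icc] at hi; omega
    · intro k hk; rw [Finset.mem_range] at hk; omega
    · intro i hi
      rw [Finset.mem_Icc] at hi
      rw [show (N:ℤ) - i = ((((N:ℤ) - i).toNat : ℕ) : ℤ) by omega,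
        show (N:ℤ) + i = (((2*N - ((N:ℤ) - i).toNat : ℕ)) : ℤ) by omega,
        zpow_natCast, zpow_natCast]
      rw [show ((((N:ℤ) - i).toNat : ℕ) : ℤ).toNat = ((N:ℤ) - i).toNat by omega]
  have geom := geom_sum₂_mul p q (2*N+1)
  have : ∑ k ∈ Finset.range (2*N+1), p ^ k * q ^ (2*N - k)
      = (p ^ (2*N+1) - q ^ (2*N+1)) / (p - q) := by
    rw [eq_div_iff (by linarith), ← geom]
    congr 1
  calc ∑ i ∈ Finset.Icc (-(N:ℤ)) N,
        (p - q) * p ^ ((N:ℤ) - i) * q ^ ((N:ℤ) + i) / (p ^ (2*N+1) - q ^ (2*N+1))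
      = ((p - q) / (p ^ (2*N+1) - q ^ (2*N+1))) *
          ∑ i ∈ Finset.Icc (-(N:ℤ)) N, p ^ ((N:ℤ) - i) * q ^ ((N:ℤ) + i) := by
        rw [Finset.mul_sum]
        refine Finset.sum_congr rfl fun i _ => by ring
    _ = 1 := by
        rw [reindex, this]
        field_simp
        exact div_self (by linarith)

lemma stationary (hN : 0 < N) (hp : 0 < p) (hq0 : 0 < q) (hpq : p + q = 1)
    (C : ℝ) (U : ℤ → ℝ)
    (hU : ∀ k : ℤ, U k = C * p ^ ((N:ℤ) - k) * q ^ ((N:ℤ) + k)) (j : Idx N) :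
    (Pmat N p q).mulVec (fun i : Idx N => U (i : ℤ)) j = U (j : ℤ) := by
  have hp' := hp.ne'
  have hq' := hq0.ne'
  have hjm := idx_mem j
  have key : (Pmat N p q).mulVec (fun i : Idx N => U (i : ℤ)) j
      = ∑ z ∈ Finset.Icc (-(N:ℤ)) N,
          (if (j:ℤ) = min (z + 1) (N:ℤ) then q * U z else 0) +
        ∑ z ∈ Finset.Icc (-(N:ℤ)) N,
          (if (j:ℤ) = max (z - 1) (-(N:ℤ)) then p * U z else 0) := by
    rw [← Finset.sum_add_distrib]
    rw [show (∑ z ∈ Finset.Icc (-(N:ℤ)) N,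
        ((if (j:ℤ) = min (z + 1) (N:ℤ) then q * U z else 0) +
         (if (j:ℤ) = max (z - 1) (-(N:ℤ)) then p * U z else 0)))
      = ∑ z : Idx N,
        ((if (j:ℤ) = min ((z:ℤ) + 1) (N:ℤ) then q * U (z:ℤ) else 0) +
         (if (j:ℤ) = max ((z:ℤ) - 1) (-(N:ℤ)) then p * U (z:ℤ) else 0))
      from (Finset.sum_coe_sort _ _).symm]
    simp only [Matrix.mulVec, dotProduct, Pmat]
    refine Finset.sum_congr rfl fun i _ => ?_
    rw [add_mul, ite_mul, ite_mul]
    simp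
  rw [key]
  rw [← Finset.sum_filter, ← Finset.sum_filter]
  rcases eq_or_lt_of_le hjm.2 with hjN | hjN
  · -- j = N
    have hf1 : (Finset.Icc (-(N:ℤ)) N).filter (fun z => (j:ℤ) = min (z + 1) (N:ℤ))
        = {(N:ℤ) - 1, (N:ℤ)} := by
      ext z
      simp only [Finset.mem_filter, Finset.mem_Icc, Finset.mem_insert, Finset.mem_singleton]
      omega
    have hf2 : (Finset.Icc (-(N:ℤ)) N).filter (fun z => (j:ℤ) = max (z - 1) (-(N:ℤ)))
        = (∅ : Finset ℤ) := by
      ext z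
      simp only [Finset.mem_filter, Finset.mem_Icc, Finset.notMem_empty, iff_false]
      omega
    rw [hf1, hf2, Finset.sum_empty, Finset.sum_pair (by omega : (N:ℤ) - 1 ≠ (N:ℤ))]
    rw [hjN]
    simp only [hU]
    have ha : p ^ ((N:ℤ) - ((N:ℤ) - 1)) = p := by norm_num
    have hb : q ^ ((N:ℤ) + ((N:ℤ) - 1)) = q ^ (2*(N:ℤ) - 1) := by congr 1; ring
    have hc : p ^ ((N:ℤ) - (N:ℤ)) = 1 := by norm_num
    have hd : q ^ ((N:ℤ) + (N:ℤ)) = q ^ (2*(N:ℤ) - 1) * q := by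
      rw [← zpow_add_one₀ hq']; congr 1; ring
    rw [ha, hb, hc, hd]
    linear_combination (C * q ^ (2*(N:ℤ) - 1) * q) * hpq
  · -- j < N
    rcases eq_or_lt_of_le hjm.1 with hjN' | hjN'
    · -- j = -N
      have hf1 : (Finset.Icc (-(N:ℤ)) N).filter (fun z => (j:ℤ) = min (z + 1) (N:ℤ))
          = (∅ : Finset ℤ) := by
        ext z
        simp only [Finset.mem_filter, Finset.mem_Icc, Finset.notMem_empty, iff_false]
        omega
      have hf2 : (Finset.Icc (-(N:ℤ)) N).filter (fun z => (j:ℤ) = max (z - 1) (-(N:ℤ)))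
          = {(-(N:ℤ)), -(N:ℤ) + 1} := by
        ext z
        simp only [Finset.mem_filter, Finset.mem_Icc, Finset.mem_insert, Finset.mem_singleton]
        omega
      rw [hf1, hf2, Finset.sum_empty, Finset.sum_pair (by omega : (-(N:ℤ)) ≠ -(N:ℤ) + 1)]
      rw [← hjN']
      simp only [hU]
      have ha : q ^ ((N:ℤ) + -(N:ℤ)) = 1 := by norm_num
      have hb : p ^ ((N:ℤ) - -(N:ℤ)) = p ^ (2*(N:ℤ) - 1) * p := by
        rw [← zpow_add_one₀ hp']; congr 1; ring
      have hc : p ^ ((N:ℤ) - (-(N:ℤ) + 1)) = p ^ (2*(N:ℤ) - 1) := by congr 1; ring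
      have hd : q ^ ((N:ℤ) + (-(N:ℤ) + 1)) = q := by norm_num
      rw [ha, hb, hc, hd]
      linear_combination (C * p ^ (2*(N:ℤ) - 1) * p) * hpq
    · -- interior
      have hf1 : (Finset.Icc (-(N:ℤ)) N).filter (fun z => (j:ℤ) = min (z + 1) (N:ℤ))
          = {(j:ℤ) - 1} := by
        ext z
        simp only [Finset.mem_filter, Finset.mem_Icc, Finset.mem_singleton]
        omega
      have hf2 : (Finset.Icc (-(N:ℤ)) N).filter (fun z => (j:ℤ) = max (z - 1) (-(N:ℤ)))
          = {(j:ℤ) + 1} := by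
        ext z
        simp only [Finset.mem_filter, Finset.mem_Icc, Finset.mem_singleton]
        omega
      rw [hf1, hf2, Finset.sum_singleton, Finset.sum_singleton]
      simp only [hU]
      have e1 : p ^ ((N:ℤ) - ((j:ℤ) - 1)) = p ^ ((N:ℤ) - (j:ℤ) - 1) * p * p := by
        rw [← zpow_add_one₀ hp', ← zpow_add_one₀ hp']; congr 1; ring
      have e2 : q ^ ((N:ℤ) + ((j:ℤ) - 1)) = q ^ ((N:ℤ) + (j:ℤ) - 1) := by congr 1; ring
      have e3 : p ^ ((N:ℤ) - ((j:ℤ) + 1)) = p ^ ((N:ℤ) - (j:ℤ) - 1) := by congr 1; ring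
      have e4 : q ^ ((N:ℤ) + ((j:ℤ) + 1)) = q ^ ((N:ℤ) + (j:ℤ) - 1) * q * q := by
        rw [← zpow_add_one₀ hq', ← zpow_add_one₀ hq']; congr 1; ring
      have e5 : p ^ ((N:ℤ) - (j:ℤ)) = p ^ ((N:ℤ) - (j:ℤ) - 1) * p := by
        rw [← zpow_add_one₀ hp']; congr 1; ring
      have e6 : q ^ ((N:ℤ) + (j:ℤ)) = q ^ ((N:ℤ) + (j:ℤ) - 1) * q := by
        rw [← zpow_add_one₀ hq']; congr 1; ring
      rw [e1, e2, e3, e4, e5, e6]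
      linear_combination (C * p ^ ((N:ℤ) - (j:ℤ) - 1) * q ^ ((N:ℤ) + (j:ℤ) - 1) * p * q) * hpq


end PP

open PP in
/-- Theorem: for every probability vector `w` on `{-N,...,N}`, the iterates `𝒫^n w`
converge entrywise to the stationary vector `u`. -/
theorem Pmat_iterates_tendsto_stationary
    (N : ℕ) (hN : 0 < N) (p q : ℝ) (hp : 1 / 2 < p) (hp1 : p < 1) (hq : q = 1 - p)
    (u : Idx N → ℝ)
    (hu : ∀ i : Idx N,
      u i = (p - q) * p ^ ((N : ℤ) - (i : ℤ)) * q ^ ((N : ℤ) + (i : ℤ))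
              / (p ^ (2 * N + 1) - q ^ (2 * N + 1)))
    (w : Idx N → ℝ) (hw0 : ∀ i, 0 ≤ w i) (hw1 : ∑ i : Idx N, w i = 1) :
    ∀ i : Idx N,
      Filter.Tendsto (fun n : ℕ => ((Pmat N p q) ^ n).mulVec w i) Filter.atTop (𝓝 (u i)) := by
  have hp0 : 0 < p := by linarith
  have hq0 : 0 < q := by rw [hq]; linarith
  have hpq : p + q = 1 := by rw [hq]; ring
  have hlt : q < p := by rw [hq]; linarith
  set P := Pmat N p q with hP
  set D : ℝ := p ^ (2 * N + 1) - q ^ (2 * N + 1) with hD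
  set C : ℝ := (p - q) / D with hC
  set U : ℤ → ℝ := fun k => C * p ^ ((N:ℤ) - k) * q ^ ((N:ℤ) + k) with hUdef
  have huU : u = fun i : Idx N => U (i : ℤ) := by
    funext i
    rw [hu i, hUdef, hC, hD]
    ring
  -- stationarity
  have hstat : P.mulVec u = u := by
    funext j
    rw [huU]
    exact stationary hN hp0 hq0 hpq C U (fun k => rfl) j
  -- sum of u is 1
  have hsumu : ∑ i : Idx N, u i = 1 := by
    rw [huU]
    rw [show (∑ i : Idx N, U (i:ℤ)) = ∑ z ∈ Finset.Icc (-(N:ℤ)) N, U z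
      from Finset.sum_coe_sort _ _]
    rw [← sum_U hN hq0 hp0 hlt]
    refine Finset.sum_congr rfl fun z _ => ?_
    rw [hUdef, hC, hD]
    ring
  -- matrix basics
  have hPnn : ∀ j i, 0 ≤ P j i := Pmat_nonneg hp0.le hq0.le
  have hPcol : ∀ i, ∑ j, P j i = 1 := Pmat_col hp0.le hq0.le hpq
  have hpownn : ∀ n j i, 0 ≤ (P ^ n) j i := pow_entry_nonneg hPnn
  have hpowcol : ∀ n i, ∑ j, (P ^ n) j i = 1 := pow_col_sum hPcol
  -- P^n u = u
  have hpowu : ∀ n, (P ^ n).mulVec u = u := by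
    intro n
    induction n with
    | zero => simp
    | succ n ih => rw [pow_succ', ← Matrix.mulVec_mulVec, ih, hstat]
  -- the difference vector
  set x : Idx N → ℝ := w - u with hx
  have hxsum : ∑ i, x i = 0 := by
    rw [hx]
    simp only [Pi.sub_apply]
    rw [Finset.sum_sub_distrib, hw1, hsumu, sub_self]
  have hdiff : ∀ n, (P ^ n).mulVec x = (P ^ n).mulVec w - u := by
    intro n
    rw [hx, Matrix.mulVec_sub, hpowu n]
  -- the L1 error
  set e : ℕ → ℝ := fun n => ∑ j, |(P ^ n).mulVec x j| with he
  have he0 : ∀ n, 0 ≤ e n := fun n => Finset.sum_nonneg fun j _ => abs_nonneg _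
  have hanti : Antitone e := by
    refine antitone_nat_of_succ_le fun n => ?_
    rw [he]
    simp only
    rw [pow_succ', ← Matrix.mulVec_mulVec]
    exact nonexpand hPnn hPcol _
  -- positivity of A = P^(4N)
  set A := P ^ (4 * N) with hA
  have hApos : ∀ j i, 0 < A j i := pow4N_pos hp0 hq0 hpownn
  set ε : ℝ := (Finset.univ (α := Idx N × Idx N)).inf'
    (Finset.univ_nonempty) (fun ji => A ji.1 ji.2) with hε
  have hεle : ∀ j i, ε ≤ A j i := fun j i =>
    Finset.inf'_le _ (Finset.mem_univ (j, i))
  have hεpos : 0 < ε := by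
    rw [hε, Finset.lt_inf'_iff]
    exact fun ji _ => hApos ji.1 ji.2
  set c : ℝ := 1 - (Fintype.card (Idx N) : ℝ) * ε with hc
  have hcard : 0 < Fintype.card (Idx N) := Fintype.card_pos
  have hc1 : c < 1 := by
    rw [hc]
    have : (0:ℝ) < (Fintype.card (Idx N) : ℝ) * ε := by positivity
    linarith
  have hc0 : 0 ≤ c := by
    have i0 : Idx N := ⟨0, by simp⟩
    have h1 : (Fintype.card (Idx N)) • ε ≤ ∑ j, A j i0 :=
      Finset.card_nsmul_le_sum _ _ _ (fun j _ => hεle j i0)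
    rw [hpowcol (4*N) i0, nsmul_eq_mul] at h1
    rw [hc]
    linarith
  -- sum of P^n x is zero
  have hsz : ∀ n, ∑ j, (P ^ n).mulVec x j = 0 :=
    fun n => mulVec_sum_zero (hpowcol n) x hxsum
  -- contraction along multiples of 4N
  have hkey : ∀ k, e (4 * N * k) ≤ c ^ k * e 0 := by
    intro k
    induction k with
    | zero => simp
    | succ k ih =>
        have hstep : e (4 * N * (k + 1)) ≤ c * e (4 * N * k) := by
          rw [he]
          simp only
          rw [show 4 * N * (k + 1) = 4 * N + 4 * N * k by ring, pow_add,
            ← Matrix.mulVec_mulVec]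
          exact contract hεle (hpowcol (4*N)) _ (hsz (4 * N * k))
        calc e (4 * N * (k + 1)) ≤ c * e (4 * N * k) := hstep
          _ ≤ c * (c ^ k * e 0) := mul_le_mul_of_nonneg_left ih hc0
          _ = c ^ (k + 1) * e 0 := by ring
  -- e n ≤ c^(n / 4N) * e 0
  have hbound : ∀ n, e n ≤ c ^ (n / (4 * N)) * e 0 := by
    intro n
    calc e n ≤ e (4 * N * (n / (4 * N))) := by
          apply hanti
          rw [mul_comm]
          exact Nat.div_mul_le_self n (4 * N)
      _ ≤ c ^ (n / (4 * N)) * e 0 := hkey _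
  -- e tends to 0
  have hdivtop : Filter.Tendsto (fun n : ℕ => n / (4 * N)) Filter.atTop Filter.atTop := by
    rw [Filter.tendsto_atTop_atTop]
    intro b
    refine ⟨4 * N * b, fun n hn => ?_⟩
    rw [Nat.le_div_iff_mul_le (by omega : 0 < 4 * N), mul_comm]
    exact hn
  have hgeo : Filter.Tendsto (fun n : ℕ => c ^ (n / (4 * N)) * e 0)
      Filter.atTop (𝓝 0) := by
    have h1 : Filter.Tendsto (fun k : ℕ => c ^ k * e 0) Filter.atTop (𝓝 (0 * e 0)) :=
      (tendsto_pow_atTop_nhds_zero_of_lt_one hc0 hc1).mul_const _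
    rw [zero_mul] at h1
    exact h1.comp hdivtop
  have hetends : Filter.Tendsto e Filter.atTop (𝓝 0) :=
    squeeze_zero he0 hbound hgeo
  -- entrywise convergence
  intro i
  have hterm : ∀ n, |(P ^ n).mulVec w i - u i| ≤ e n := by
    intro n
    rw [show (P ^ n).mulVec w i - u i = (P ^ n).mulVec x i by rw [hdiff n]; rfl]
    exact Finset.single_le_sum (f := fun j => |(P ^ n).mulVec x j|)
      (fun j _ => abs_nonneg _) (Finset.mem_univ i)
  have hzero : Filter.Tendsto (fun n => (P ^ n).mulVec w i - u i) Filter.atTop (𝓝 0) := by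
    apply squeeze_zero_norm _ hetends
    intro n
    rw [Real.norm_eq_abs]
    exact hterm n
  have := hzero.add_const (u i)
  rw [zero_add] at this
  convert this using 2 with n
  ring
end
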